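/- The Möbius function of the lattice ℰ^n of embedded subsets of an n-set satisfies the recursion μ_{ℰ^n} = −(μ_{𝒫^n} + (n−1)·μ_{ℰ^{n−1}}), where μ_{ℰ^m} = μ_{ℰ^m}(bottom, top) and μ_{𝒫^m} = μ_{𝒫^m}(bottom, top) = (−1)^{m−1}(m−1)! is the Möbius function value of the partition lattice of an m-set, with the conventions μ_{ℰ^0} = μ_{𝒫^0} = 1. -/

import Mathlib

open scoped BigOperators

/-- `modp n A` is the modular partition `P^A_⊥` of `Fin n` whose unique (possibly)
non-singleton block is `A`, all other blocks being singletons. -/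
def modp (n : ℕ) (A : Set (Fin n)) : Setoid (Fin n) where
  r x y := x = y ∨ (x ∈ A ∧ y ∈ A)
  iseqv := by
    refine ⟨fun _ => Or.inl rfl, ?_, ?_⟩
    · rintro x y (rfl | ⟨hx, hy⟩)
      · exact Or.inl rfl
      · exact Or.inr ⟨hy, hx⟩
    · rintro x y z (rfl | ⟨hx, hy⟩) h
      · exact h
      · rcases h with rfl | ⟨hy', hz⟩
        · exact Or.inr ⟨hx, hy⟩
        · exact Or.inr ⟨hx, hz⟩

/-- The product `X^N = 2^N × 𝒫^N` of the subset lattice and the partition lattice,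
ordered componentwise. -/
abbrev XN (n : ℕ) := Set (Fin n) × Setoid (Fin n)

/-- The closure operator `cl` on `X^N`:  `cl(∅,P) = (∅,P)` and, for `A ≠ ∅`,
`cl(A,P) = (Ā, P ⊔ P^A_⊥)` where `Ā` is the block of `P ⊔ P^A_⊥` containing `A`. -/
def EmbClosure (n : ℕ) (x : XN n) : XN n :=
  ({y | ∃ a ∈ x.1, (x.2 ⊔ modp n x.1) y a}, x.2 ⊔ modp n x.1)

/-- An embedded subset is a pair that coincides with its closure. -/
def IsEmbedded (n : ℕ) (x : XN n) : Prop := EmbClosure n x = x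

/-- The lattice `ℰ^N` of embedded subsets, with the induced order. -/
abbrev Emb (n : ℕ) := {x : XN n // IsEmbedded n x}

lemma modp_le_of_subsingleton {n : ℕ} {A : Set (Fin n)} (h : A.Subsingleton)
    (Q : Setoid (Fin n)) : modp n A ≤ Q := by
  rw [Setoid.le_def]
  intro x y hxy
  rcases hxy with rfl | ⟨hx, hy⟩
  · exact Q.refl' x
  · obtain rfl := h hx hy
    exact Q.refl' x

lemma modp_eq_bot_of_subsingleton {n : ℕ} {A : Set (Fin n)} (h : A.Subsingleton) :
    modp n A = ⊥ :=
  le_antisymm (modp_le_of_subsingleton h ⊥) bot_le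

lemma embedded_empty (n : ℕ) (Q : Setoid (Fin n)) : IsEmbedded n (∅, Q) := by
  unfold IsEmbedded EmbClosure
  refine Prod.ext ?_ ?_
  · simp
  · simpa using sup_eq_left.mpr (modp_le_of_subsingleton Set.subsingleton_empty Q)

lemma embedded_univ_top (n : ℕ) : IsEmbedded n (Set.univ, ⊤) := by
  unfold IsEmbedded EmbClosure
  refine Prod.ext ?_ ?_
  · ext y
    simp only [Set.mem_setOf_eq, Set.mem_univ, iff_true]
    exact ⟨y, trivial, Setoid.refl' _ y⟩
  · exact sup_eq_left.mpr le_top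

lemma embedded_singleton (n : ℕ) (i : Fin n) : IsEmbedded n ({i}, ⊥) := by
  have hb : modp n ({i} : Set (Fin n)) = ⊥ :=
    modp_eq_bot_of_subsingleton Set.subsingleton_singleton
  unfold IsEmbedded EmbClosure
  refine Prod.ext ?_ ?_
  · ext y
    simp only [Set.mem_setOf_eq, hb, sup_idem, Set.mem_singleton_iff]
    constructor
    · rintro ⟨a, ha, hrel⟩
      subst ha
      have h' : ((⊥ : Setoid (Fin n)) ⊔ modp n {a}) y a := hrel
      rw [hb, sup_idem] at h'
      first
        | exact h'
        | simpa [Setoid.bot_def] using h'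
    · rintro rfl
      exact ⟨y, rfl, Setoid.refl' _ y⟩
  · simp [hb]

/-- The bottom element `(∅, P_⊥)` of `ℰ^N`. -/
def botE (n : ℕ) : Emb n := ⟨(∅, ⊥), embedded_empty n ⊥⟩

/-- The top element `(N, P^⊤)` of `ℰ^N`. -/
def topE (n : ℕ) : Emb n := ⟨(Set.univ, ⊤), embedded_univ_top n⟩

/-- The atom `({i}, P_⊥)` of `ℰ^N`. -/
def atomS (n : ℕ) (i : Fin n) : Emb n := ⟨({i}, ⊥), embedded_singleton n i⟩

/-- The atom `(∅, [ij])` of `ℰ^N`, where `[ij]` is the atom of the partition lattice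
whose unique non-singleton block is the pair `{i, j}`. -/
def atomP (n : ℕ) (i j : Fin n) : Emb n := ⟨(∅, modp n {i, j}), embedded_empty n _⟩

/-- A pair is an atom candidate: of the form `({i},P_⊥)` or `(∅,[ij])` with `i ≠ j`. -/
def IsAtomPair (n : ℕ) (a : XN n) : Prop :=
  (∃ i : Fin n, a = ({i}, ⊥)) ∨ ∃ i j : Fin n, i ≠ j ∧ a = (∅, modp n {i, j})

/-- The number of blocks `|P|` of a partition. -/
noncomputable def numBlocks {α : Type*} (P : Setoid α) : ℕ := P.classes.ncard

/-- The rank function `r(A,P) = (n − |P|) + min{|A|,1}` of `ℰ^N`. -/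
noncomputable def erank (n : ℕ) (x : XN n) : ℕ := (n - numBlocks x.2) + min x.1.ncard 1

/-- The partition `Q^S` of `S` induced by a partition `Q` of `N`. -/
def indPart {n : ℕ} (S : Set (Fin n)) (Q : Setoid (Fin n)) : Setoid S :=
  Setoid.comap Subtype.val Q

/-- `mu` is the Möbius function of the (finite) poset `α`. -/
def IsMobius {α : Type*} [PartialOrder α] (mu : α → α → ℤ) : Prop :=
  (∀ x, mu x x = 1) ∧
  (∀ x y, ¬x ≤ y → mu x y = 0) ∧
  (∀ x y, x < y → mu x y = -∑ᶠ z ∈ Set.Ico x y, mu x z)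

/-! ### General Möbius machinery -/

set_option linter.unusedSectionVars false

attribute [local instance] Classical.propDecidable

section MobiusGeneral

variable {α : Type*} [PartialOrder α]

lemma sum_indicator_singleton [Fintype α] (f : α → ℤ) (b : α) :
    ∑ x : α, Set.indicator {b} f x = f b := by
  rw [Finset.sum_eq_single b]
  · exact Set.indicator_of_mem rfl f
  · intro x _ hx
    exact Set.indicator_of_notMem (by simp [hx]) f
  · intro h
    exact absurd (Finset.mem_univ b) h

lemma finsum_mem_eq_sum_ind [Fintype α] (S : Set α) (f : α → ℤ) :
    ∑ᶠ z ∈ S, f z = ∑ z : α, S.indicator f z := by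
  rw [finsum_mem_def, finsum_eq_sum_of_fintype]

lemma sum_Icc_split [Fintype α] (g : α → ℤ) {x y : α} (hxy : x < y) :
    ∑ z : α, (Set.Icc x y).indicator g z = (∑ᶠ z ∈ Set.Ico x y, g z) + g y := by
  rw [finsum_mem_eq_sum_ind, ← sum_indicator_singleton g y, ← Finset.sum_add_distrib]
  refine Finset.sum_congr rfl fun z _ => ?_
  simp only [Set.indicator_apply, Set.mem_Icc, Set.mem_Ico, Set.mem_singleton_iff]
  by_cases hxz : x ≤ z
  · by_cases hzy : z = y
    · subst hzy
      simp [hxz, lt_irrefl]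
    · by_cases hzy2 : z ≤ y
      · have hlt : z < y := lt_of_le_of_ne hzy2 hzy
        simp [hxz, hzy, hzy2, hlt]
      · have hnlt : ¬ z < y := fun h => hzy2 (le_of_lt h)
        simp [hxz, hzy, hzy2, hnlt]
  · have hzy : ¬ z = y := fun h => hxz (h ▸ le_of_lt hxy)
    simp [hxz, hzy]

lemma IsMobius.sum_Icc [Fintype α] {mu : α → α → ℤ} (h : IsMobius mu)
    {x y : α} (hxy : x ≤ y) :
    ∑ z : α, (Set.Icc x y).indicator (mu x) z = if x = y then 1 else 0 := by
  rcases eq_or_lt_of_le hxy with rfl | hlt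
  · rw [if_pos rfl, Set.Icc_self, sum_indicator_singleton, h.1]
  · rw [sum_Icc_split _ hlt, if_neg (ne_of_lt hlt), h.2.2 x y hlt]
    ring

lemma isMobius_of_Icc [Fintype α] {mu : α → α → ℤ}
    (h1 : ∀ x, mu x x = 1) (h0 : ∀ x y, ¬x ≤ y → mu x y = 0)
    (hs : ∀ x y, x < y → ∑ z : α, (Set.Icc x y).indicator (mu x) z = 0) :
    IsMobius mu := by
  refine ⟨h1, h0, fun x y hxy => ?_⟩
  have := hs x y hxy
  rw [sum_Icc_split _ hxy] at this
  linarith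

lemma IsMobius.unique [Finite α] {mu mu' : α → α → ℤ}
    (h : IsMobius mu) (h' : IsMobius mu') : ∀ y x, mu x y = mu' x y := by
  intro y
  induction y using WellFoundedLT.induction with
  | _ y IH =>
    intro x
    by_cases hxy : x ≤ y
    · rcases eq_or_lt_of_le hxy with rfl | hlt
      · rw [h.1, h'.1]
      · rw [h.2.2 x y hlt, h'.2.2 x y hlt]
        congr 1
        haveI := Fintype.ofFinite α
        rw [finsum_mem_eq_sum_ind, finsum_mem_eq_sum_ind]
        refine Finset.sum_congr rfl fun z _ => ?_
        by_cases hz : z ∈ Set.Ico x y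
        · rw [Set.indicator_of_mem hz, Set.indicator_of_mem hz, IH z hz.2]
        · rw [Set.indicator_of_notMem hz, Set.indicator_of_notMem hz]
    · rw [h.2.1 x y hxy, h'.2.1 x y hxy]

noncomputable def muDef [Fintype α] (x : α) (y : α) : ℤ :=
  if x = y then 1
  else if x < y then - ∑ z ∈ (Set.Ico x y).toFinset.attach, muDef x z.1
  else 0
termination_by (Set.Iio y).toFinset.card
decreasing_by
  have hz := z.2
  rw [Set.mem_toFinset, Set.mem_Ico] at hz
  apply Finset.card_lt_card
  rw [Finset.ssubset_def]
  constructor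
  · intro w hw
    rw [Set.mem_toFinset, Set.mem_Iio] at *
    exact lt_trans hw hz.2
  · intro hsub
    have hzy : (z : α) ∈ (Set.Iio y).toFinset := by
      rw [Set.mem_toFinset, Set.mem_Iio]; exact hz.2
    have := hsub hzy
    rw [Set.mem_toFinset, Set.mem_Iio] at this
    exact lt_irrefl _ this

lemma isMobius_muDef [Fintype α] : IsMobius (muDef (α := α)) := by
  refine ⟨fun x => by rw [muDef.eq_def]; simp, fun x y hxy => ?_, fun x y hxy => ?_⟩
  · rw [muDef.eq_def, if_neg (fun h => hxy (le_of_eq h)), if_neg (fun h => hxy (le_of_lt h))]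
  · rw [muDef.eq_def, if_neg (ne_of_lt hxy), if_pos hxy]
    congr 1
    rw [Finset.sum_attach _ (fun z => muDef x z), ← finsum_mem_coe_finset]
    simp [Set.coe_toFinset]

end MobiusGeneral
section ProdMobius

variable {α β : Type*} [PartialOrder α] [PartialOrder β] [Fintype α] [Fintype β]

lemma isMobius_prod {muA : α → α → ℤ} {muB : β → β → ℤ}
    (hA : IsMobius muA) (hB : IsMobius muB) :
    IsMobius (fun (x y : α × β) => muA x.1 y.1 * muB x.2 y.2) := by
  refine isMobius_of_Icc (fun x => by rw [hA.1, hB.1]; ring) ?_ ?_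
  · intro x y hxy
    rw [Prod.le_def, not_and_or] at hxy
    rcases hxy with h | h
    · rw [hA.2.1 _ _ h]; ring
    · rw [hB.2.1 _ _ h]; ring
  · intro x y hxy
    trans (∑ z : α × β, (Set.Icc x.1 y.1).indicator (muA x.1) z.1 *
        (Set.Icc x.2 y.2).indicator (muB x.2) z.2)
    · refine Finset.sum_congr rfl fun z _ => ?_
      by_cases h1 : z.1 ∈ Set.Icc x.1 y.1 <;> by_cases h2 : z.2 ∈ Set.Icc x.2 y.2
      · have hm : z ∈ Set.Icc x y := by
          rw [Set.mem_Icc, Prod.le_def, Prod.le_def]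
          exact ⟨⟨h1.1, h2.1⟩, ⟨h1.2, h2.2⟩⟩
        rw [Set.indicator_of_mem hm, Set.indicator_of_mem h1, Set.indicator_of_mem h2]
      all_goals {
        have hm : ¬ z ∈ Set.Icc x y := by
          rw [Set.mem_Icc, Prod.le_def, Prod.le_def]
          rintro ⟨⟨a1, a2⟩, ⟨b1, b2⟩⟩
          first
          | exact h2 ⟨a2, b2⟩
          | exact h1 ⟨a1, b1⟩
        rw [Set.indicator_of_notMem hm]
        first
        | rw [Set.indicator_of_notMem h2, mul_zero]
        | rw [Set.indicator_of_notMem h1, zero_mul] }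
    · rw [Fintype.sum_prod_type]
      have e2 : ∀ a : α, ∑ b : β,
          (Set.Icc x.1 y.1).indicator (muA x.1) a * (Set.Icc x.2 y.2).indicator (muB x.2) b =
          (Set.Icc x.1 y.1).indicator (muA x.1) a *
          ∑ b : β, (Set.Icc x.2 y.2).indicator (muB x.2) b := fun a => by
        rw [Finset.mul_sum]
      rw [Finset.sum_congr rfl (fun a _ => e2 a), ← Finset.sum_mul]
      have hle := le_of_lt hxy
      rw [hA.sum_Icc hle.1, hB.sum_Icc hle.2]
      by_cases h1 : x.1 = y.1
      · have h2 : ¬ x.2 = y.2 := by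
          intro h2
          exact (ne_of_lt hxy) (Prod.ext h1 h2)
        simp [h2]
      · simp [h1]

end ProdMobius

section BoolMobius

variable {γ : Type*} [Fintype γ]

/-- The key alternating-sum identity on the Boolean lattice. -/
lemma alt_sum (T : Set γ) :
    ∑ A : Set γ, (if A ⊆ T then ((-1:ℤ))^A.ncard else 0) = if T = ∅ then 1 else 0 := by
  classical
  have e1 : ∑ s : Finset γ, (if (↑s : Set γ) ⊆ T then ((-1:ℤ))^(↑s : Set γ).ncard else 0)
      = ∑ A : Set γ, (if A ⊆ T then ((-1:ℤ))^A.ncard else 0) :=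
    Fintype.sum_equiv Fintype.finsetEquivSet _ _ (fun s => by simp)
  rw [← e1]
  have e2 : ∀ s : Finset γ, (if (↑s : Set γ) ⊆ T then ((-1:ℤ))^(↑s : Set γ).ncard else 0)
      = (if s ∈ T.toFinset.powerset then ((-1:ℤ))^s.card else 0) := fun s => by
    rw [Set.ncard_coe_finset]
    exact if_congr (by rw [Finset.mem_powerset, Set.subset_toFinset]) rfl rfl
  rw [Finset.sum_congr rfl (fun s _ => e2 s), Finset.sum_ite_mem, Finset.univ_inter,
    Finset.sum_powerset_neg_one_pow_card]
  exact if_congr (by rw [Set.toFinset_eq_empty]) rfl rfl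

/-- Möbius function of the Boolean lattice `Set γ` for a finite type. -/
noncomputable def muBool (A B : Set γ) : ℤ := if A ⊆ B then (-1)^((B \ A).ncard) else 0

lemma isMobius_muBool : IsMobius (muBool (γ := γ)) := by
  refine isMobius_of_Icc (fun A => by simp [muBool]) (fun A B h => by
    rw [muBool]; exact if_neg h) ?_
  intro A B hAB
  have hbij : Function.Bijective (fun C : Set γ => symmDiff C A) := by
    have hinv : Function.Involutive (fun C : Set γ => symmDiff C A) :=
      fun C => by simp [symmDiff_symmDiff_cancel_right]
    exact hinv.bijective
  rw [← Function.Bijective.sum_comp hbij ((Set.Icc A B).indicator (muBool A))]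
  have key : ∀ S : Set γ,
      (Set.Icc A B).indicator (muBool A) (symmDiff S A)
      = (if S ⊆ B \ A then ((-1:ℤ))^S.ncard else 0) := by
    intro S
    by_cases hS : S ⊆ B \ A
    · have hdisj : Disjoint A S := by
        rw [Set.disjoint_left]
        intro a haA haS
        exact (hS haS).2 haA
      have hsd : symmDiff S A = S ∪ A := by
        rw [symmDiff_def, Disjoint.sdiff_eq_left hdisj.symm, Disjoint.sdiff_eq_left hdisj]
        rfl
      have hmem : symmDiff S A ∈ Set.Icc A B := by
        rw [hsd, Set.mem_Icc]
        refine ⟨Set.subset_union_right, Set.union_subset (fun a ha => (hS ha).1) (le_of_lt hAB)⟩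
      have hsub : A ⊆ symmDiff S A := hmem.1
      rw [Set.indicator_of_mem hmem, if_pos hS, muBool, if_pos hsub, hsd, Set.union_diff_right,
        Disjoint.sdiff_eq_left hdisj.symm]
    · rw [if_neg hS, Set.indicator_of_notMem]
      intro hmem
      apply hS
      intro a haS
      by_cases haA : a ∈ A
      · exfalso
        have h1 : a ∈ symmDiff S A := hmem.1 haA
        rw [Set.mem_symmDiff] at h1
        tauto
      · have h1 : a ∈ symmDiff S A := by rw [Set.mem_symmDiff]; tauto
        exact ⟨hmem.2 h1, haA⟩
  rw [Finset.sum_congr rfl (fun S _ => key S), alt_sum]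
  rw [if_neg]
  intro h
  rw [Set.diff_eq_empty] at h
  exact absurd (le_antisymm (le_of_lt hAB) h) (ne_of_lt hAB)

end BoolMobius
section ClosureMobius

variable {L : Type*} [PartialOrder L] [OrderBot L] [Fintype L]

lemma closure_mobius (cl : L → L) (hmono : Monotone cl) (hle : ∀ x, x ≤ cl x)
    (hidem : ∀ x, cl (cl x) = cl x) (hbot : cl (⊥ : L) = ⊥)
    {muL : L → L → ℤ} {muE : {x : L // cl x = x} → {x : L // cl x = x} → ℤ}
    (hL : IsMobius muL) (hE : IsMobius muE) :
    ∀ d : {x : L // cl x = x},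
      muE ⟨⊥, hbot⟩ d = ∑ x : L, ({z : L | cl z = d.1}).indicator (muL ⊥) x := by
  classical
  set S : {x : L // cl x = x} → ℤ :=
    fun c => ∑ x : L, ({z : L | cl z = c.1}).indicator (muL ⊥) x with hSdef
  show ∀ d, muE ⟨⊥, hbot⟩ d = S d
  have key : ∀ d : {x : L // cl x = x},
      (∑ c : {x : L // cl x = x}, (Set.Iic d).indicator S c) = if (⊥:L) = d.1 then 1 else 0 := by
    intro d
    have swap : (∑ c : {x : L // cl x = x}, (Set.Iic d).indicator S c)
        = ∑ x : L, ∑ c : {x : L // cl x = x},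
            (Set.Iic d).indicator (fun c' => ({z : L | cl z = c'.1}).indicator (muL ⊥) x) c := by
      rw [Finset.sum_comm]
      refine Finset.sum_congr rfl fun c _ => ?_
      by_cases hc : c ∈ Set.Iic d
      · rw [Set.indicator_of_mem hc, hSdef]
        exact Finset.sum_congr rfl fun x _ => by rw [Set.indicator_of_mem hc]
      · rw [Set.indicator_of_notMem hc]
        exact (Finset.sum_eq_zero (fun x _ => by rw [Set.indicator_of_notMem hc])).symm
    rw [swap]
    have inner : ∀ x : L, (∑ c : {x : L // cl x = x},
        (Set.Iic d).indicator (fun c' => ({z : L | cl z = c'.1}).indicator (muL ⊥) x) c)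
        = (Set.Icc ⊥ d.1).indicator (muL ⊥) x := by
      intro x
      have e3 : ∀ c : {x : L // cl x = x},
          (Set.Iic d).indicator (fun c' => ({z : L | cl z = c'.1}).indicator (muL ⊥) x) c
          = ({c' : {x : L // cl x = x} | c' = ⟨cl x, hidem x⟩ ∧ x ≤ d.1}).indicator
              (fun _ => muL ⊥ x) c := by
        intro c
        by_cases hcd : c ∈ Set.Iic d
        · rw [Set.indicator_of_mem hcd]
          by_cases hcl : cl x = c.1
          · have hc2 : c ∈ {c' : {x : L // cl x = x} | c' = ⟨cl x, hidem x⟩ ∧ x ≤ d.1} := by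
              refine ⟨Subtype.ext hcl.symm, ?_⟩
              calc x ≤ cl x := hle x
              _ = c.1 := hcl
              _ ≤ d.1 := Subtype.coe_le_coe.mpr hcd
            rw [Set.indicator_of_mem (show x ∈ {z : L | cl z = c.1} from hcl),
              Set.indicator_of_mem hc2]
          · rw [Set.indicator_of_notMem (show ¬ x ∈ {z : L | cl z = c.1} from hcl),
              Set.indicator_of_notMem (fun hc2 => hcl (by rw [hc2.1]))]
        · rw [Set.indicator_of_notMem hcd, Set.indicator_of_notMem]
          rintro ⟨rfl, hxd⟩
          apply hcd
          show cl x ≤ d.1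
          calc cl x ≤ cl d.1 := hmono hxd
          _ = d.1 := d.2
      rw [Finset.sum_congr rfl (fun c _ => e3 c)]
      by_cases hx : x ≤ d.1
      · have e4 : ({c' : {x : L // cl x = x} | c' = ⟨cl x, hidem x⟩ ∧ x ≤ d.1})
            = {(⟨cl x, hidem x⟩ : {x : L // cl x = x})} := by
          ext c'
          simp [hx]
        rw [e4, sum_indicator_singleton (fun _ => muL ⊥ x)
            ((⟨cl x, hidem x⟩ : {x : L // cl x = x})),
          Set.indicator_of_mem (Set.mem_Icc.mpr ⟨bot_le, hx⟩)]
      · rw [Finset.sum_eq_zero (fun c _ => Set.indicator_of_notMem (fun h => hx h.2) _),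
          Set.indicator_of_notMem (fun h => hx h.2)]
    rw [Finset.sum_congr rfl (fun x _ => inner x)]
    exact hL.sum_Icc bot_le
  intro d
  induction d using WellFoundedLT.induction with
  | _ d IH =>
    by_cases hd : (⟨⊥, hbot⟩ : {x : L // cl x = x}) = d
    · subst hd
      rw [hE.1]
      simp only [hSdef]
      have e0 : ∀ x : L,
          ({z : L | cl z = ((⟨⊥, hbot⟩ : {x : L // cl x = x}) : L)}).indicator (muL ⊥) x
          = ({(⊥ : L)} : Set L).indicator (muL ⊥) x := by
        intro x
        have hiff : x ∈ {z : L | cl z = ((⟨⊥, hbot⟩ : {x : L // cl x = x}) : L)} ↔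
            x ∈ ({(⊥ : L)} : Set L) := by
          show cl x = ⊥ ↔ x = ⊥
          exact ⟨fun h => le_antisymm (le_trans (hle x) (le_of_eq h)) bot_le,
            fun h => by rw [h, hbot]⟩
        by_cases hx : x ∈ ({(⊥ : L)} : Set L)
        · rw [Set.indicator_of_mem hx, Set.indicator_of_mem (hiff.mpr hx)]
        · rw [Set.indicator_of_notMem hx, Set.indicator_of_notMem (fun h => hx (hiff.mp h))]
      rw [Finset.sum_congr rfl (fun x _ => e0 x), sum_indicator_singleton (muL ⊥) ⊥, hL.1]
    · have hbd : (⟨⊥, hbot⟩ : {x : L // cl x = x}) ≤ d := Subtype.coe_le_coe.mp bot_le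
      have hlt : (⟨⊥, hbot⟩ : {x : L // cl x = x}) < d := lt_of_le_of_ne hbd hd
      rw [hE.2.2 _ _ hlt, finsum_mem_eq_sum_ind]
      have e1 : ∀ c, (Set.Ico ⟨⊥,hbot⟩ d).indicator (muE ⟨⊥,hbot⟩) c
          = (Set.Ico ⟨⊥,hbot⟩ d).indicator S c := fun c => by
        by_cases hc : c ∈ Set.Ico ⟨⊥,hbot⟩ d
        · rw [Set.indicator_of_mem hc, Set.indicator_of_mem hc, IH c hc.2]
        · rw [Set.indicator_of_notMem hc, Set.indicator_of_notMem hc]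
      rw [Finset.sum_congr rfl (fun c _ => e1 c)]
      have hkd := key d
      rw [if_neg (fun h => hd (Subtype.ext h))] at hkd
      have split : ∀ c, (Set.Iic d).indicator S c
          = (Set.Ico ⟨⊥,hbot⟩ d).indicator S c + ({d} : Set _).indicator S c := fun c => by
        by_cases h1 : c = d
        · subst h1
          rw [Set.indicator_of_mem (Set.mem_Iic.mpr (le_refl c)),
            Set.indicator_of_notMem (fun hm => lt_irrefl c hm.2),
            Set.indicator_of_mem (Set.mem_singleton c), zero_add]
        · by_cases h2 : c ≤ d
          · have hm : c ∈ Set.Ico ⟨⊥,hbot⟩ d :=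
              ⟨Subtype.coe_le_coe.mp bot_le, lt_of_le_of_ne h2 h1⟩
            rw [Set.indicator_of_mem (Set.mem_Iic.mpr h2), Set.indicator_of_mem hm,
              Set.indicator_of_notMem (by simp [h1]), add_zero]
          · have hm : ¬ c ∈ Set.Ico ⟨⊥,hbot⟩ d := fun hc => h2 (le_of_lt hc.2)
            rw [Set.indicator_of_notMem (fun hc => h2 (Set.mem_Iic.mp hc)),
              Set.indicator_of_notMem hm, Set.indicator_of_notMem (by simp [h1]), add_zero]
      rw [Finset.sum_congr rfl (fun c _ => split c), Finset.sum_add_distrib,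
        sum_indicator_singleton S d] at hkd
      linarith [hkd]

end ClosureMobius
section EmbApply

instance finiteSetoid {γ : Type*} [Finite γ] : Finite (Setoid γ) :=
  Finite.of_injective (fun s => s.r)
    (fun a b h => Setoid.ext (fun {x y} => iff_of_eq (congrFun (congrFun h x) y)))

noncomputable instance instFintypeSetoidFin (n : ℕ) : Fintype (Setoid (Fin n)) :=
  Fintype.ofFinite _

lemma modp_mono {n : ℕ} {A B : Set (Fin n)} (h : A ⊆ B) : modp n A ≤ modp n B := by
  rw [Setoid.le_def]
  rintro x y (rfl | ⟨hx, hy⟩)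
  · exact Setoid.refl' _ _
  · exact Or.inr ⟨h hx, h hy⟩

lemma le_embClosure (n : ℕ) (x : XN n) : x ≤ EmbClosure n x := by
  refine ⟨?_, ?_⟩
  · intro a ha
    exact ⟨a, ha, Setoid.refl' _ a⟩
  · exact le_sup_left

lemma embClosure_mono (n : ℕ) : Monotone (EmbClosure n) := by
  intro x y hxy
  obtain ⟨h1, h2⟩ := hxy
  have hs : x.2 ⊔ modp n x.1 ≤ y.2 ⊔ modp n y.1 := sup_le_sup h2 (modp_mono h1)
  refine ⟨?_, hs⟩
  rintro z ⟨a, ha, hrel⟩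
  exact ⟨a, h1 ha, Setoid.le_def.mp hs hrel⟩

lemma embClosure_idem (n : ℕ) (x : XN n) : EmbClosure n (EmbClosure n x) = EmbClosure n x := by
  obtain ⟨A, P⟩ := x
  set Q := P ⊔ modp n A with hQ
  set Abar := {y | ∃ a ∈ A, Q y a} with hAbar
  have hmle : modp n Abar ≤ Q := by
    rw [Setoid.le_def]
    rintro x y (rfl | ⟨⟨a, ha, hxa⟩, ⟨b, hb, hyb⟩⟩)
    · exact Setoid.refl' _ _
    · have hab : Q a b := by
        by_cases h : a = b
        · subst h; exact Setoid.refl' _ _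
        · exact Setoid.le_def.mp le_sup_right (Or.inr ⟨ha, hb⟩)
      exact Setoid.trans' _ hxa (Setoid.trans' _ hab (Setoid.symm' _ hyb))
  have hsup : Q ⊔ modp n Abar = Q := sup_eq_left.mpr hmle
  show EmbClosure n (Abar, Q) = (Abar, Q)
  unfold EmbClosure
  refine Prod.ext ?_ ?_
  · show {y | ∃ b ∈ Abar, (Q ⊔ modp n Abar) y b} = Abar
    rw [hsup]
    ext y
    constructor
    · rintro ⟨b, ⟨a, ha, hba⟩, hyb⟩
      exact ⟨a, ha, Setoid.trans' _ hyb hba⟩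
    · intro hy
      exact ⟨y, hy, Setoid.refl' _ _⟩
  · exact hsup

lemma embClosure_bot (n : ℕ) : EmbClosure n (⊥ : XN n) = ⊥ := by
  refine Prod.ext ?_ ?_
  · show {y | ∃ a ∈ (⊥ : XN n).1, ((⊥ : XN n).2 ⊔ modp n (⊥ : XN n).1) y a} = (⊥ : XN n).1
    ext y
    constructor
    · rintro ⟨a, ha, _⟩
      exact absurd ha (Set.notMem_empty a)
    · intro hy
      exact absurd hy (Set.notMem_empty y)
  · show (⊥ : XN n).2 ⊔ modp n (⊥ : XN n).1 = (⊥ : XN n).2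
    rw [sup_eq_left]
    exact modp_le_of_subsingleton Set.subsingleton_empty _

lemma embClosure_eq_top_iff (n : ℕ) (A : Set (Fin n)) (P : Setoid (Fin n)) :
    EmbClosure n (A, P) = ((Set.univ : Set (Fin n)), (⊤ : Setoid (Fin n))) ↔
    Quotient.mk P '' A = Set.univ := by
  constructor
  · intro h
    have h1 : {y | ∃ a ∈ A, (P ⊔ modp n A) y a} = Set.univ := congrArg Prod.fst h
    have h2 : P ⊔ modp n A = ⊤ := congrArg Prod.snd h
    rw [Set.eq_univ_iff_forall]
    intro b
    obtain ⟨y₀, rfl⟩ := Quotient.exists_rep b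
    by_contra hcon
    have hno : ∀ a ∈ A, ¬ P a y₀ := by
      intro a ha hP
      exact hcon ⟨a, ha, Quotient.sound hP⟩
    set Q : Setoid (Fin n) :=
      ⟨fun u v => (P u y₀ ↔ P v y₀),
        ⟨fun _ => Iff.rfl, fun h => h.symm, fun h h' => h.trans h'⟩⟩ with hQdef
    have hPQ : P ≤ Q := by
      rw [Setoid.le_def]
      intro u v huv
      exact ⟨fun h' => Setoid.trans' P (Setoid.symm' P huv) h',
        fun h' => Setoid.trans' P huv h'⟩
    have hmQ : modp n A ≤ Q := by
      rw [Setoid.le_def]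
      rintro u v (rfl | ⟨hu, hv⟩)
      · exact Iff.rfl
      · exact iff_of_false (hno _ hu) (hno _ hv)
    have hQtop : (⊤ : Setoid (Fin n)) ≤ Q := by
      rw [← h2]
      exact sup_le hPQ hmQ
    have hy₀ : y₀ ∈ {y | ∃ a ∈ A, (P ⊔ modp n A) y a} := by
      rw [h1]; trivial
    obtain ⟨a, ha, _⟩ := hy₀
    have htop : (⊤ : Setoid (Fin n)) a y₀ := by
      simp [Setoid.top_def]
    have hQa : Q a y₀ := Setoid.le_def.mp hQtop htop
    exact hno a ha (hQa.mpr (Setoid.refl' P y₀))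
  · intro h
    have hex : ∀ u : Fin n, ∃ a ∈ A, P a u := by
      intro u
      have hu : (⟦u⟧ : Quotient P) ∈ Quotient.mk P '' A := by
        rw [h]; trivial
      obtain ⟨a, ha, hq⟩ := hu
      exact ⟨a, ha, Quotient.exact hq⟩
    have hPsup : P ⊔ modp n A = ⊤ := by
      refine le_antisymm le_top ?_
      rw [Setoid.le_def]
      intro u v _
      obtain ⟨a, ha, hau⟩ := hex u
      obtain ⟨b, hb, hbv⟩ := hex v
      have hab : (P ⊔ modp n A) a b := by
        by_cases hcase : a = b
        · subst hcase; exact Setoid.refl' _ _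
        · exact Setoid.le_def.mp le_sup_right (Or.inr ⟨ha, hb⟩)
      have hua : (P ⊔ modp n A) u a := Setoid.le_def.mp le_sup_left (Setoid.symm' P hau)
      have hbv' : (P ⊔ modp n A) b v := Setoid.le_def.mp le_sup_left hbv
      exact Setoid.trans' _ hua (Setoid.trans' _ hab hbv')
    refine Prod.ext ?_ ?_
    · show {y | ∃ a ∈ A, (P ⊔ modp n A) y a} = Set.univ
      rw [Set.eq_univ_iff_forall]
      intro y
      obtain ⟨a, ha, hay⟩ := hex y
      exact ⟨a, ha, Setoid.le_def.mp le_sup_left (Setoid.symm' P hay)⟩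
    · exact hPsup

lemma numBlocks_eq_card_quotient {n : ℕ} (P : Setoid (Fin n)) :
    numBlocks P = Nat.card (Quotient P) := by
  rw [numBlocks, ← Nat.card_coe_set_eq, Nat.card_congr (Setoid.quotientEquivClasses P)]

end EmbApply

section SurjSum

attribute [local instance] Classical.propDecidable

lemma surj_sum {γ δ : Type*} [Fintype γ] [Fintype δ] (q : γ → δ)
    (hq : Function.Surjective q) :
    ∑ A : Set γ, (if q '' A = Set.univ then ((-1:ℤ))^A.ncard else 0) = (-1)^(Nat.card δ) := by
  have step1 : ∀ A : Set γ, (if q '' A = Set.univ then ((-1:ℤ))^A.ncard else 0)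
      = (∑ S : Set δ, (if S ⊆ (q '' A)ᶜ then ((-1:ℤ))^S.ncard else 0)) * ((-1:ℤ))^A.ncard := by
    intro A
    rw [alt_sum ((q '' A)ᶜ)]
    have hiff : ((q '' A)ᶜ = ∅) ↔ (q '' A = Set.univ) := Set.compl_empty_iff
    by_cases h : q '' A = Set.univ
    · rw [if_pos h, if_pos (hiff.mpr h), one_mul]
    · rw [if_neg h, if_neg (fun hh => h (hiff.mp hh)), zero_mul]
  rw [Finset.sum_congr rfl (fun A _ => step1 A)]
  have expand : ∀ A : Set γ,
      (∑ S : Set δ, (if S ⊆ (q '' A)ᶜ then ((-1:ℤ))^S.ncard else 0)) * ((-1:ℤ))^A.ncard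
      = ∑ S : Set δ, (if S ⊆ (q '' A)ᶜ then ((-1:ℤ))^S.ncard else 0) * ((-1:ℤ))^A.ncard :=
    fun A => Finset.sum_mul _ _ _
  rw [Finset.sum_congr rfl (fun A _ => expand A), Finset.sum_comm]
  have step2 : ∀ S : Set δ,
      (∑ A : Set γ, (if S ⊆ (q '' A)ᶜ then ((-1:ℤ))^S.ncard else 0) * ((-1:ℤ))^A.ncard)
      = ((-1:ℤ))^S.ncard * ∑ A : Set γ, (if A ⊆ (q ⁻¹' S)ᶜ then ((-1:ℤ))^A.ncard else 0) := by
    intro S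
    rw [Finset.mul_sum]
    refine Finset.sum_congr rfl fun A _ => ?_
    have hiff : S ⊆ (q '' A)ᶜ ↔ A ⊆ (q ⁻¹' S)ᶜ := by
      constructor
      · intro h a ha hmem
        exact h hmem ⟨a, ha, rfl⟩
      · intro h b hbS hbim
        obtain ⟨a, ha, hab⟩ := hbim
        exact h ha (by rw [Set.mem_preimage, hab]; exact hbS)
    by_cases h : S ⊆ (q '' A)ᶜ
    · rw [if_pos h, if_pos (hiff.mp h)]
    · rw [if_neg h, if_neg (fun hh => h (hiff.mpr hh))]
      ring
  rw [Finset.sum_congr rfl (fun S _ => step2 S)]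
  have step3 : ∀ S : Set δ,
      ((-1:ℤ))^S.ncard * (∑ A : Set γ, (if A ⊆ (q ⁻¹' S)ᶜ then ((-1:ℤ))^A.ncard else 0))
      = ({(Set.univ : Set δ)} : Set (Set δ)).indicator (fun S => ((-1:ℤ))^S.ncard) S := by
    intro S
    rw [alt_sum]
    have hiff : ((q ⁻¹' S)ᶜ = ∅) ↔ (S = Set.univ) := by
      rw [Set.compl_empty_iff]
      constructor
      · intro h
        rw [Set.eq_univ_iff_forall]
        intro b
        obtain ⟨a, rfl⟩ := hq b
        exact (Set.eq_univ_iff_forall.mp h) a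
      · intro h
        rw [h, Set.preimage_univ]
    by_cases h : S = Set.univ
    · rw [if_pos (hiff.mpr h), mul_one, Set.indicator_of_mem (Set.mem_singleton_iff.mpr h)]
    · rw [if_neg (fun hh => h (hiff.mp hh)), mul_zero,
        Set.indicator_of_notMem (fun hh => h (Set.mem_singleton_iff.mp hh))]
  rw [Finset.sum_congr rfl (fun S _ => step3 S),
    sum_indicator_singleton (fun S : Set δ => ((-1:ℤ))^S.ncard) Set.univ, Set.ncard_univ]

end SurjSum
section CharPoly

attribute [local instance] Classical.propDecidable

/-- Functions respecting a partition correspond to functions on the quotient. -/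
def kerLiftEquiv (n x : ℕ) (Q : Setoid (Fin n)) :
    {f : Fin n → Fin x // Q ≤ Setoid.ker f} ≃ (Quotient Q → Fin x) where
  toFun := fun fp => Quotient.lift fp.1 (fun a b h => Setoid.le_def.mp fp.2 h)
  invFun := fun g => ⟨g ∘ Quotient.mk Q,
    Setoid.le_def.mpr (fun {a b} h => congrArg g (Quotient.sound h))⟩
  left_inv := fun fp => Subtype.ext (funext fun a => rfl)
  right_inv := fun g => funext fun b => Quotient.inductionOn b (fun a => rfl)

lemma card_ker_ge (n x : ℕ) (Q : Setoid (Fin n)) :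
    Nat.card {f : Fin n → Fin x // Q ≤ Setoid.ker f} = x ^ numBlocks Q := by
  rw [Nat.card_congr (kerLiftEquiv n x Q), Nat.card_fun, numBlocks_eq_card_quotient]
  congr 1
  rw [Nat.card_eq_fintype_card, Fintype.card_fin]

lemma charpoly_eval (n : ℕ) {muP : Setoid (Fin n) → Setoid (Fin n) → ℤ}
    (h : IsMobius muP) (x : ℕ) :
    ∑ Q : Setoid (Fin n), muP ⊥ Q * (x:ℤ)^(numBlocks Q)
      = ∏ k ∈ Finset.range n, ((x:ℤ) - k) := by
  have hcount : ∀ Q : Setoid (Fin n), ((x:ℤ))^(numBlocks Q)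
      = ∑ f : Fin n → Fin x, (if Q ≤ Setoid.ker f then (1:ℤ) else 0) := by
    intro Q
    rw [Finset.sum_boole, ← Fintype.card_subtype]
    have hc := card_ker_ge n x Q
    rw [Nat.card_eq_fintype_card] at hc
    rw [hc]
    push_cast
    ring
  calc ∑ Q : Setoid (Fin n), muP ⊥ Q * (x:ℤ)^(numBlocks Q)
      = ∑ Q : Setoid (Fin n), ∑ f : Fin n → Fin x,
          (if Q ≤ Setoid.ker f then muP ⊥ Q else 0) := by
        refine Finset.sum_congr rfl fun Q _ => ?_
        rw [hcount Q, Finset.mul_sum]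
        refine Finset.sum_congr rfl fun f _ => ?_
        by_cases h1 : Q ≤ Setoid.ker f
        · rw [if_pos h1, if_pos h1, mul_one]
        · rw [if_neg h1, if_neg h1, mul_zero]
    _ = ∑ f : Fin n → Fin x, ∑ Q : Setoid (Fin n),
          (if Q ≤ Setoid.ker f then muP ⊥ Q else 0) := Finset.sum_comm
    _ = ∑ f : Fin n → Fin x, (if (⊥ : Setoid (Fin n)) = Setoid.ker f then (1:ℤ) else 0) := by
        refine Finset.sum_congr rfl fun f _ => ?_
        have e5 : ∀ Q : Setoid (Fin n), (if Q ≤ Setoid.ker f then muP ⊥ Q else 0)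
            = (Set.Icc ⊥ (Setoid.ker f)).indicator (muP ⊥) Q := by
          intro Q
          by_cases h1 : Q ≤ Setoid.ker f
          · rw [if_pos h1, Set.indicator_of_mem (Set.mem_Icc.mpr ⟨bot_le, h1⟩)]
          · rw [if_neg h1, Set.indicator_of_notMem (fun hm => h1 (Set.mem_Icc.mp hm).2)]
        rw [Finset.sum_congr rfl (fun Q _ => e5 Q)]
        exact h.sum_Icc bot_le
    _ = ∏ k ∈ Finset.range n, ((x:ℤ) - k) := by
        have e6 : ∀ f : Fin n → Fin x,
            ((⊥ : Setoid (Fin n)) = Setoid.ker f) ↔ Function.Injective f := by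
          intro f
          constructor
          · intro h1 a b hab
            have h2 : Setoid.ker f a b := hab
            rw [← h1] at h2
            simpa [Setoid.bot_def] using h2
          · intro h1
            refine le_antisymm bot_le ?_
            rw [Setoid.le_def]
            intro a b hab
            have h2 : a = b := h1 hab
            subst h2
            exact Setoid.refl' _ _
        rw [Finset.sum_congr rfl (fun f _ => if_congr (e6 f) rfl rfl), Finset.sum_boole,
          ← Fintype.card_subtype]
        have e7 : Fintype.card {f : Fin n → Fin x // Function.Injective f}
            = Fintype.card (Fin n ↪ Fin x) :=
          Fintype.card_congr (Equiv.subtypeInjectiveEquivEmbedding _ _)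
        rw [e7, Fintype.card_embedding_eq, Fintype.card_fin, Fintype.card_fin]
        by_cases hxn : n ≤ x
        · rw [Nat.descFactorial_eq_prod_range, Nat.cast_prod]
          refine Finset.prod_congr rfl fun i hi => ?_
          rw [Finset.mem_range] at hi
          rw [Nat.cast_sub (le_of_lt (lt_of_lt_of_le hi hxn))]
        · rw [Nat.descFactorial_eq_zero_iff_lt.mpr (lt_of_not_ge hxn), Nat.cast_zero]
          symm
          refine Finset.prod_eq_zero (Finset.mem_range.mpr (lt_of_not_ge hxn)) ?_
          rw [sub_self]

lemma charpoly_neg_one (n : ℕ) {muP : Setoid (Fin n) → Setoid (Fin n) → ℤ}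
    (h : IsMobius muP) :
    ∑ Q : Setoid (Fin n), muP ⊥ Q * (-1:ℤ)^(numBlocks Q)
      = (-1)^n * (Nat.factorial n : ℤ) := by
  set p : Polynomial ℤ :=
    ∑ Q : Setoid (Fin n), Polynomial.C (muP ⊥ Q) * Polynomial.X ^ (numBlocks Q) with hp
  set q : Polynomial ℤ :=
    ∏ k ∈ Finset.range n, (Polynomial.X - Polynomial.C (k:ℤ)) with hq
  have heval : ∀ t : ℤ, p.eval t = ∑ Q : Setoid (Fin n), muP ⊥ Q * t^(numBlocks Q) := by
    intro t
    rw [hp, Polynomial.eval_finset_sum]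
    refine Finset.sum_congr rfl fun Q _ => ?_
    simp
  have heval2 : ∀ t : ℤ, q.eval t = ∏ k ∈ Finset.range n, (t - k) := by
    intro t
    rw [hq, Polynomial.eval_prod]
    refine Finset.prod_congr rfl fun k _ => ?_
    simp
  have hpq : p = q := by
    apply Polynomial.eq_of_infinite_eval_eq
    have hsub : Set.range (fun m : ℕ => (m:ℤ)) ⊆ {t : ℤ | p.eval t = q.eval t} := by
      rintro _ ⟨m, rfl⟩
      show p.eval (m:ℤ) = q.eval (m:ℤ)
      rw [heval, heval2]
      exact charpoly_eval n h m
    exact Set.Infinite.mono hsub (Set.infinite_range_of_injective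
      (fun a b hab => by exact_mod_cast hab))
  have hev := congrArg (Polynomial.eval (-1 : ℤ)) hpq
  rw [heval, heval2] at hev
  rw [hev]
  have e8 : ∀ k ∈ Finset.range n, ((-1:ℤ) - (k:ℤ)) = (-1) * ((k:ℤ) + 1) := fun k _ => by ring
  rw [Finset.prod_congr rfl e8, Finset.prod_mul_distrib, Finset.prod_const, Finset.card_range]
  congr 1
  have : ∀ k ∈ Finset.range n, ((k:ℤ) + 1) = (((k + 1 : ℕ) : ℤ)) := fun k _ => by push_cast; ring
  rw [Finset.prod_congr rfl this, ← Nat.cast_prod, Finset.prod_range_add_one_eq_factorial]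

end CharPoly
section Final

attribute [local instance] Classical.propDecidable

/-- The product Möbius function on `X^N`. -/
noncomputable def muXdef (m : ℕ) : XN m → XN m → ℤ :=
  fun x y => muBool x.1 y.1 * muDef x.2 y.2

lemma isMobius_muXdef (m : ℕ) : IsMobius (muXdef m) :=
  isMobius_prod isMobius_muBool isMobius_muDef

lemma muXdef_bot (m : ℕ) (A : Set (Fin m)) (P : Setoid (Fin m)) :
    muXdef m ⊥ (A, P) = ((-1:ℤ))^A.ncard * muDef ⊥ P := by
  show muBool (⊥ : XN m).1 A * muDef (⊥ : XN m).2 P = _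
  have h1 : (⊥ : XN m).1 = (∅ : Set (Fin m)) := rfl
  have h2 : (⊥ : XN m).2 = (⊥ : Setoid (Fin m)) := rfl
  rw [h1, h2]
  simp [muBool]

/-- The central computation: the Möbius value of the lattice of embedded subsets. -/
lemma emb_mu_value (m : ℕ) (mu : Emb m → Emb m → ℤ) (h : IsMobius mu) :
    mu (botE m) (topE m) = (-1:ℤ)^m * (Nat.factorial m : ℤ) := by
  classical
  have hcm := closure_mobius (L := XN m) (EmbClosure m) (embClosure_mono m) (le_embClosure m)
      (embClosure_idem m) (embClosure_bot m) (isMobius_muXdef m) h (topE m)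
  have hbot : (⟨⊥, embClosure_bot m⟩ : Emb m) = botE m := Subtype.ext (by
    show (⊥ : XN m) = ((∅ : Set (Fin m)), (⊥ : Setoid (Fin m)))
    rfl)
  replace hcm : mu (botE m) (topE m) = _ := hcm
  rw [hcm, Fintype.sum_prod_type]
  have hpoint : ∀ (A : Set (Fin m)) (P : Setoid (Fin m)),
      ({z : XN m | EmbClosure m z = (topE m).1}).indicator (muXdef m ⊥) (A, P)
      = muDef ⊥ P * (if Quotient.mk P '' A = Set.univ then ((-1:ℤ))^A.ncard else 0) := by
    intro A P
    by_cases hT : Quotient.mk P '' A = Set.univ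
    · have hmem : (A, P) ∈ {z : XN m | EmbClosure m z = (topE m).1} :=
        (embClosure_eq_top_iff m A P).mpr hT
      rw [Set.indicator_of_mem hmem, muXdef_bot, if_pos hT]
      ring
    · have hmem : (A, P) ∉ {z : XN m | EmbClosure m z = (topE m).1} :=
        fun hh => hT ((embClosure_eq_top_iff m A P).mp hh)
      rw [Set.indicator_of_notMem hmem, if_neg hT, mul_zero]
  rw [Finset.sum_congr rfl (fun A _ => Finset.sum_congr rfl (fun P _ => hpoint A P)),
    Finset.sum_comm]
  have hfac : ∀ P : Setoid (Fin m),
      (∑ A : Set (Fin m), muDef ⊥ P *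
        (if Quotient.mk P '' A = Set.univ then ((-1:ℤ))^A.ncard else 0))
      = muDef ⊥ P * ((-1:ℤ))^(numBlocks P) := by
    intro P
    rw [← Finset.mul_sum, surj_sum (Quotient.mk P) (fun b => Quotient.exists_rep b),
      ← numBlocks_eq_card_quotient]
  rw [Finset.sum_congr rfl (fun P _ => hfac P)]
  exact charpoly_neg_one m isMobius_muDef

end Final
theorem mobius_recursion (n : ℕ) (hn : 1 ≤ n)
    (mu1 : Emb n → Emb n → ℤ) (mu2 : Emb (n - 1) → Emb (n - 1) → ℤ)
    (h1 : IsMobius mu1) (h2 : IsMobius mu2) :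
    mu1 (botE n) (topE n) =
      -((-1) ^ (n - 1) * (Nat.factorial (n - 1) : ℤ) +
        ((n - 1 : ℕ) : ℤ) * mu2 (botE (n - 1)) (topE (n - 1))) := by
  rw [emb_mu_value n mu1 h1, emb_mu_value (n-1) mu2 h2]
  obtain ⟨k, rfl⟩ := Nat.exists_eq_succ_of_ne_zero (by omega : n ≠ 0)
  simp only [Nat.succ_sub_one, Nat.succ_eq_add_one, Nat.factorial_succ, pow_succ]
  push_cast
  ring
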